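/- For every positive integer n, the n-th harmonic sum satisfies ln(n) + γ < Σ_{k=1}^{n} 1/k < ln(n) + γ + 1/(2n), where γ is the Euler–Mascheroni constant. -/

import Mathlib

open Real Filter

/-- Key inequality: `log y < (y - 1/y)/2` for `y > 1`. -/
lemma log_lt_half_sub_inv {y : ℝ} (hy : 1 < y) :
    Real.log y < (y - y⁻¹) / 2 := by
  set f : ℝ → ℝ := fun x => (x - x⁻¹) / 2 - Real.log x with hf
  have hmono : StrictMonoOn f (Set.Ici 1) := by
    apply strictMonoOn_of_deriv_pos (convex_Ici 1)
    · apply ContinuousOn.sub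
      · exact (continuousOn_id.sub (continuousOn_inv₀.mono (by
          intro x hx; simp at hx ⊢; linarith))).div_const 2
      · exact Real.continuousOn_log.mono (by intro x hx; simp at hx ⊢; linarith)
    · intro x hx
      rw [interior_Ici] at hx
      have hx1 : (1 : ℝ) < x := hx
      have hx0 : (0 : ℝ) < x := lt_trans one_pos hx1
      have hder : HasDerivAt f ((1 - (-(x ^ 2)⁻¹)) / 2 - x⁻¹) x := by
        exact (((hasDerivAt_id x).sub (hasDerivAt_inv hx0.ne')).div_const 2).sub
          (Real.hasDerivAt_log hx0.ne')
      rw [hder.deriv]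
      have h1 : (1 - (-(x ^ 2)⁻¹)) / 2 - x⁻¹ = (x - 1) ^ 2 / (2 * x ^ 2) := by
        field_simp
        ring
      rw [h1]
      exact div_pos (pow_pos (by linarith) 2) (by positivity)
  have := hmono (Set.self_mem_Ici) (Set.mem_Ici.mpr hy.le) hy
  simp only [hf, Real.log_one, inv_one, sub_self, zero_div, sub_zero] at this
  linarith

lemma aux_strictMono : StrictMono (fun n : ℕ => (harmonic n : ℝ) - Real.log n - 1 / (2 * n)) := by
  apply strictMono_nat_of_lt_succ
  intro n
  rcases Nat.eq_zero_or_pos n with rfl | hn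
  · norm_num [harmonic_succ, harmonic_zero]
  have hn0 : (0 : ℝ) < n := by exact_mod_cast hn
  have hy : (1 : ℝ) < ((n : ℝ) + 1) / n := by
    rw [lt_div_iff₀ hn0]; linarith
  have key := log_lt_half_sub_inv hy
  rw [Real.log_div (by positivity) (by positivity)] at key
  have hinv : (((n : ℝ) + 1) / n)⁻¹ = (n : ℝ) / (n + 1) := by
    rw [inv_div]
  rw [hinv] at key
  have hh : (harmonic (n + 1) : ℝ) = (harmonic n : ℝ) + ((n : ℝ) + 1)⁻¹ := by
    rw [harmonic_succ]; push_cast; ring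
  have hlog : Real.log ((n : ℕ) + 1 : ℕ) = Real.log ((n : ℝ) + 1) := by push_cast; ring_nf
  have hsplit : (((n : ℝ) + 1) / n - (n : ℝ) / (n + 1)) / 2 =
      ((n : ℝ) + 1)⁻¹ + 1 / (2 * n) - 1 / (2 * ((n : ℝ) + 1)) := by
    field_simp
    ring
  rw [hsplit] at key
  have : Real.log ((n : ℝ) + 1) - Real.log n <
      ((n : ℝ) + 1)⁻¹ + 1 / (2 * n) - 1 / (2 * ((n : ℝ) + 1)) := key
  simp only [hh]
  push_cast
  linarith

lemma aux_tendsto : Tendsto (fun n : ℕ => (harmonic n : ℝ) - Real.log n - 1 / (2 * n))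
    atTop (nhds Real.eulerMascheroniConstant) := by
  have h1 := Real.tendsto_harmonic_sub_log
  have h2 : Tendsto (fun n : ℕ => 1 / (2 * (n : ℝ))) atTop (nhds 0) := by
    have := tendsto_one_div_atTop_nhds_zero_nat (𝕜 := ℝ)
    have h3 : Tendsto (fun n : ℕ => (1 / (n : ℝ)) * (1 / 2)) atTop (nhds (0 * (1/2))) :=
      this.mul_const _
    simpa [one_div, mul_comm, mul_inv] using h3
  simpa using h1.sub h2

theorem harmonic_bounds (n : ℕ) (hn : 0 < n) :
    Real.log n + Real.eulerMascheroniConstant < ∑ k ∈ Finset.Icc 1 n, (1 : ℝ) / k ∧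
    ∑ k ∈ Finset.Icc 1 n, (1 : ℝ) / k <
      Real.log n + Real.eulerMascheroniConstant + 1 / (2 * n) := by
  have hsum : ∑ k ∈ Finset.Icc 1 n, (1 : ℝ) / k = (harmonic n : ℝ) := by
    rw [harmonic_eq_sum_Icc]
    push_cast
    simp [one_div]
  rw [hsum]
  constructor
  · have := Real.eulerMascheroniConstant_lt_eulerMascheroniSeq' n
    rw [Real.eulerMascheroniSeq', if_neg hn.ne'] at this
    linarith
  · -- harmonic n - log n - 1/(2n) < γ
    have h1 : (harmonic n : ℝ) - Real.log n - 1 / (2 * n) <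
        (harmonic (n+1) : ℝ) - Real.log (n+1) - 1 / (2 * (n+1)) := by
      have := aux_strictMono (Nat.lt_succ_self n)
      push_cast at this ⊢
      convert this using 3 <;> push_cast <;> ring_nf
    have h2 : (harmonic (n+1) : ℝ) - Real.log (n+1) - 1 / (2 * (n+1)) ≤
        Real.eulerMascheroniConstant := by
      have := aux_strictMono.monotone.ge_of_tendsto aux_tendsto (n+1)
      push_cast at this ⊢
      convert this using 2 <;> push_cast <;> ring_nf
    linarith
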